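/- For integers 0 ≤ k ≤ n/2, the sum of binomial coefficients satisfies ∑_{i=0}^{k} C(n, i) ≤ 2^{H(k/n)·n}, where H(p) = p·log₂(1/p) + (1−p)·log₂(1/(1−p)) is the binary entropy function. -/

import Mathlib

/-- The binary entropy function `H(p) = -p log₂ p - (1-p) log₂ (1-p)`
(with the convention `H(0) = H(1) = 0`, which holds since `Real.logb 2 0 = 0`). -/
noncomputable def binEnt (p : ℝ) : ℝ :=
  -(p * Real.logb 2 p) - (1 - p) * Real.logb 2 (1 - p)

lemma two_rpow_neg_mul_logb (x c : ℝ) (hx : 0 < x) :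
    (2:ℝ) ^ (-(c * Real.logb 2 x)) = (x ^ c)⁻¹ := by
  rw [show -(c * Real.logb 2 x) = Real.logb 2 x * (-c) by ring,
    Real.rpow_mul (by norm_num), Real.rpow_logb (by norm_num) (by norm_num) hx,
    Real.rpow_neg hx.le]

theorem sum_choose_le_two_pow_entropy (n k : ℕ) (hk : 2 * k ≤ n) :
    ((∑ i ∈ Finset.range (k + 1), n.choose i : ℕ) : ℝ) ≤
      2 ^ (binEnt ((k : ℝ) / (n : ℝ)) * (n : ℝ)) := by
  rcases Nat.eq_zero_or_pos k with rfl | hkpos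
  · norm_num [binEnt]
  have hn : 0 < n := lt_of_lt_of_le (by omega) hk
  have hkn : k ≤ n := by omega
  set p : ℝ := (k : ℝ) / (n : ℝ) with hp
  have hn0 : (0:ℝ) < n := by exact_mod_cast hn
  have hp0 : 0 < p := div_pos (by exact_mod_cast hkpos) hn0
  have hphalf : p ≤ 1/2 := by
    have h2k : 2 * (k:ℝ) ≤ (n:ℝ) := by exact_mod_cast hk
    rw [hp, div_le_div_iff₀ hn0 (by norm_num)]
    linarith
  have hp1 : p < 1 := lt_of_le_of_lt hphalf (by norm_num)
  have h1p : 0 < 1 - p := by linarith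
  have hple : p ≤ 1 - p := by linarith
  have hpn : p * n = k := by rw [hp, div_mul_cancel₀ _ hn0.ne']
  have h1pn : (1 - p) * n = ((n - k : ℕ) : ℝ) := by
    push_cast [hkn]
    rw [sub_mul, one_mul, hpn]
  have key : (∑ i ∈ Finset.range (k + 1), (n.choose i : ℝ)) * (p ^ k * (1 - p) ^ (n - k)) ≤ 1 := by
    have expand : (∑ i ∈ Finset.range (n + 1), p ^ i * (1 - p) ^ (n - i) * (n.choose i : ℝ)) = 1 := by
      rw [← add_pow]
      norm_num
    calc (∑ i ∈ Finset.range (k + 1), (n.choose i : ℝ)) * (p ^ k * (1 - p) ^ (n - k))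
        = ∑ i ∈ Finset.range (k + 1), p ^ k * (1 - p) ^ (n - k) * (n.choose i : ℝ) := by
          rw [Finset.sum_mul]; apply Finset.sum_congr rfl; intros; ring
      _ ≤ ∑ i ∈ Finset.range (k + 1), p ^ i * (1 - p) ^ (n - i) * (n.choose i : ℝ) := by
          apply Finset.sum_le_sum
          intro i hi
          have hik : i ≤ k := Nat.lt_succ_iff.mp (Finset.mem_range.mp hi)
          have h1 : p ^ k = p ^ i * p ^ (k - i) := by rw [← pow_add]; congr 1; omega
          have h2 : (1 - p) ^ (n - i) = (1 - p) ^ (n - k) * (1 - p) ^ (k - i) := by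
            rw [← pow_add]; congr 1; omega
          have hpow : p ^ (k - i) ≤ (1 - p) ^ (k - i) := pow_le_pow_left₀ hp0.le hple _
          rw [h1, h2]
          calc p ^ i * p ^ (k - i) * ((1 - p) ^ (n - k)) * (n.choose i : ℝ)
              = p ^ i * (1 - p) ^ (n - k) * (n.choose i : ℝ) * p ^ (k - i) := by ring
            _ ≤ p ^ i * (1 - p) ^ (n - k) * (n.choose i : ℝ) * (1 - p) ^ (k - i) := by
                apply mul_le_mul_of_nonneg_left hpow; positivity
            _ = p ^ i * ((1 - p) ^ (n - k) * (1 - p) ^ (k - i)) * (n.choose i : ℝ) := by ring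
      _ ≤ ∑ i ∈ Finset.range (n + 1), p ^ i * (1 - p) ^ (n - i) * (n.choose i : ℝ) := by
          apply Finset.sum_le_sum_of_subset_of_nonneg
          · exact Finset.range_subset_range.mpr (by omega)
          · intro i _ _
            positivity
      _ = 1 := expand
  have hrhs : (2:ℝ) ^ (binEnt p * n) = (p ^ k * (1 - p) ^ (n - k))⁻¹ := by
    have hb : binEnt p * n =
        -((k:ℝ) * Real.logb 2 p) + -(((n - k : ℕ):ℝ) * Real.logb 2 (1 - p)) := by
      rw [binEnt]; rw [← hpn, ← h1pn]; ring
    rw [hb, Real.rpow_add (by norm_num : (0:ℝ) < 2),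
      two_rpow_neg_mul_logb _ _ hp0, two_rpow_neg_mul_logb _ _ h1p,
      Real.rpow_natCast, Real.rpow_natCast, ← mul_inv]
  have hpos : (0:ℝ) < p ^ k * (1 - p) ^ (n - k) := by positivity
  rw [hrhs, inv_eq_one_div, le_div_iff₀ hpos]
  push_cast
  exact key
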